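/- Let f be an elliptic polynomial of degree d over ℚ_p in n variables, β > 0, 1 ≤ ρ < ∞ and t > 0. Then the function ξ ↦ e^{-t·|f(ξ)|_p^β} belongs to L^ρ(ℚ_p^n) with respect to the Haar measure on ℚ_p^n. -/

import Mathlib

open MeasureTheory MvPolynomial Metric Set ENNReal Pointwise

lemma aux_eval_smul {R : Type*} [CommSemiring R] {n d : ℕ} {f : MvPolynomial (Fin n) R}
    (hf : f.IsHomogeneous d) (c : R) (ξ : Fin n → R) :
    eval (c • ξ) f = c ^ d * eval ξ f := by
  rw [eval_eq, eval_eq, Finset.mul_sum]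
  refine Finset.sum_congr rfl fun m hm => ?_
  have hdeg : (∑ i ∈ m.support, m i) = d := by
    have h1 := hf (MvPolynomial.mem_support_iff.mp hm)
    rw [← h1, Finsupp.weight_apply]
    simp [Finsupp.sum]
  calc (coeff m f) * ∏ i ∈ m.support, (c • ξ) i ^ m i
      = coeff m f * ∏ i ∈ m.support, (c ^ m i * ξ i ^ m i) := by
        simp [Pi.smul_apply, smul_eq_mul, mul_pow]
    _ = c ^ d * (coeff m f * ∏ i ∈ m.support, ξ i ^ m i) := by
        rw [Finset.prod_mul_distrib, Finset.prod_pow_eq_pow_sum, hdeg]; ring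

lemma aux_elliptic {p : ℕ} [hp : Fact p.Prime] {n d : ℕ} (hd : 0 < d)
    (f : MvPolynomial (Fin n) ℚ_[p]) (hhom : f.IsHomogeneous d)
    (hzero : ∀ ξ : Fin n → ℚ_[p], eval ξ f = 0 ↔ ξ = 0) :
    ∃ C : ℝ, 0 < C ∧ ∀ ξ : Fin n → ℚ_[p], C * ‖ξ‖ ^ d ≤ ‖eval ξ f‖ := by
  rcases Nat.eq_zero_or_pos n with hn | hn
  · refine ⟨1, one_pos, fun ξ => ?_⟩
    have hξ : ‖ξ‖ = 0 := by
      have : ξ = 0 := funext fun i => absurd i.2 (by omega)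
      simp [this]
    rw [hξ, zero_pow hd.ne', mul_zero]
    exact norm_nonneg _
  · haveI : Nonempty (Fin n) := ⟨⟨0, hn⟩⟩
    have hcs : IsCompact (sphere (0 : Fin n → ℚ_[p]) 1) := isCompact_sphere 0 1
    have hne : (sphere (0 : Fin n → ℚ_[p]) 1).Nonempty := by
      refine ⟨fun _ => 1, ?_⟩
      simp [mem_sphere_iff_norm]
    have hcont : Continuous fun ξ : Fin n → ℚ_[p] => ‖eval ξ f‖ :=
      (MvPolynomial.continuous_eval (p := f)).norm
    obtain ⟨ξ₁, hξ₁s, hmin'⟩ := hcs.exists_isMinOn hne hcont.continuousOn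
    have hmin := isMinOn_iff.mp hmin'
    have hξ₁n : ‖ξ₁‖ = 1 := by simpa [mem_sphere_iff_norm] using hξ₁s
    have hξ₁ : ξ₁ ≠ 0 := by
      intro h; rw [h] at hξ₁n; simp at hξ₁n
    refine ⟨‖eval ξ₁ f‖, ?_, fun ξ => ?_⟩
    · rw [norm_pos_iff]
      exact fun h => hξ₁ ((hzero ξ₁).mp h)
    rcases eq_or_ne ξ 0 with rfl | hξ
    · rw [norm_zero, zero_pow hd.ne', mul_zero]
      exact norm_nonneg _
    · obtain ⟨i, -, hi⟩ := Finset.exists_mem_eq_sup Finset.univ Finset.univ_nonempty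
        (fun i => ‖ξ i‖₊)
      have hnn : ‖ξ‖₊ = ‖ξ i‖₊ := by rw [Pi.nnnorm_def, hi]
      have hnormi : ‖ξ i‖ = ‖ξ‖ := by
        simpa using congrArg (fun x : NNReal => (x : ℝ)) hnn.symm
      have hc0 : ξ i ≠ 0 := by
        intro h
        apply hξ
        have : ‖ξ‖ = 0 := by rw [← hnormi, h, norm_zero]
        exact norm_eq_zero.mp this
      set c := ξ i with hc
      have hη : ‖c⁻¹ • ξ‖ = 1 := by
        rw [norm_smul, norm_inv, hnormi]
        exact inv_mul_cancel₀ (norm_ne_zero_iff.mpr hξ)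
      have hmem : c⁻¹ • ξ ∈ sphere (0 : Fin n → ℚ_[p]) 1 := by
        simpa [mem_sphere_iff_norm] using hη
      have hkey : eval ξ f = c ^ d * eval (c⁻¹ • ξ) f := by
        rw [← aux_eval_smul hhom c (c⁻¹ • ξ), smul_smul, mul_inv_cancel₀ hc0, one_smul]
      rw [hkey, norm_mul, norm_pow, hnormi]
      have := hmin _ hmem
      have hξpos : (0:ℝ) ≤ ‖ξ‖ ^ d := by positivity
      calc ‖eval ξ₁ f‖ * ‖ξ‖ ^ d ≤ ‖eval (c⁻¹ • ξ) f‖ * ‖ξ‖ ^ d := by gcongr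
        _ = ‖ξ‖ ^ d * ‖eval (c⁻¹ • ξ) f‖ := mul_comm _ _

lemma aux_digit {p : ℕ} [hp : Fact p.Prime] (k : ℕ) (y : ℚ_[p])
    (hy : ‖y‖ ≤ (p:ℝ) ^ (k+1)) :
    ∃ c : Fin p, ‖y - (c : ℚ_[p]) * (p:ℚ_[p]) ^ (-(k+1:ℤ))‖ ≤ (p:ℝ) ^ k := by
  have hp1 : (1:ℝ) < p := by exact_mod_cast hp.out.one_lt
  have hp0 : (0:ℝ) < p := lt_trans one_pos hp1
  have hz : ‖y * (p:ℚ_[p]) ^ ((k+1:ℕ):ℤ)‖ ≤ 1 := by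
    rw [norm_mul, Padic.norm_p_zpow]
    have : (p:ℝ) ^ (-((k+1:ℕ):ℤ)) = ((p:ℝ) ^ (k+1))⁻¹ := by
      rw [zpow_neg, zpow_natCast]
    rw [this]
    rw [← div_eq_mul_inv, div_le_one (by positivity)]
    exact hy
  set z : ℤ_[p] := ⟨y * (p:ℚ_[p]) ^ ((k+1:ℕ):ℤ), hz⟩ with hzdef
  obtain ⟨c, hcp, hc⟩ := PadicInt.exists_mem_range (x := z)
  refine ⟨⟨c, hcp⟩, ?_⟩
  have h1 : ‖z - (c:ℤ_[p])‖ < 1 := by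
    rw [PadicInt.maximalIdeal_eq_span_p, Ideal.mem_span_singleton,
      ← PadicInt.norm_lt_one_iff_dvd] at hc
    exact hc
  have h1' : ‖(z:ℚ_[p]) - (c:ℚ_[p])‖ < 1 := by
    have : ((z - (c:ℤ_[p]) : ℤ_[p]) : ℚ_[p]) = (z:ℚ_[p]) - (c:ℚ_[p]) := by push_cast; ring
    rw [← this, PadicInt.padic_norm_e_of_padicInt]
    exact h1
  have h2 : ‖(z:ℚ_[p]) - (c:ℚ_[p])‖ ≤ (p:ℝ) ^ (-1:ℤ) := by
    have := (Padic.norm_le_pow_iff_norm_lt_pow_add_one ((z:ℚ_[p]) - (c:ℚ_[p])) (-1)).mpr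
    apply this
    simpa using h1'
  have hy' : y - (c:ℚ_[p]) * (p:ℚ_[p]) ^ (-(k+1:ℤ)) =
      ((z:ℚ_[p]) - (c:ℚ_[p])) * (p:ℚ_[p]) ^ (-(k+1:ℤ)) := by
    have hpne : ((p:ℚ_[p]) ^ ((k+1:ℕ):ℤ)) * (p:ℚ_[p]) ^ (-(k+1:ℤ)) = 1 := by
      rw [← zpow_add₀ (by exact_mod_cast hp.out.ne_zero : (p:ℚ_[p]) ≠ 0)]
      have : ((k+1:ℕ):ℤ) + (-(k+1:ℤ)) = 0 := by push_cast; ring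
      rw [this, zpow_zero]
    have : (z:ℚ_[p]) = y * (p:ℚ_[p]) ^ ((k+1:ℕ):ℤ) := rfl
    rw [this, sub_mul, mul_assoc, hpne, mul_one]
  rw [hy', norm_mul, Padic.norm_p_zpow, neg_neg]
  calc ‖(z:ℚ_[p]) - (c:ℚ_[p])‖ * (p:ℝ) ^ (k+1:ℤ)
      ≤ (p:ℝ) ^ (-1:ℤ) * (p:ℝ) ^ (k+1:ℤ) := by gcongr
    _ = (p:ℝ) ^ k := by
        rw [show ((p:ℝ) ^ k) = (p:ℝ) ^ (k:ℤ) from (zpow_natCast _ _).symm,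
          ← zpow_add₀ (ne_of_gt hp0)]
        congr 1
        ring

lemma aux_ball_cover {p : ℕ} [hp : Fact p.Prime] (n : ℕ) [MeasurableSpace ℚ_[p]]
    [BorelSpace ℚ_[p]] (μ : Measure (Fin n → ℚ_[p])) [μ.IsAddHaarMeasure] (k : ℕ) :
    μ (closedBall 0 ((p:ℝ)^(k+1))) ≤ (p:ℝ≥0∞)^n * μ (closedBall 0 ((p:ℝ)^k)) := by
  have hp0 : (0:ℝ) < p := by exact_mod_cast hp.out.pos
  have hsub : closedBall (0 : Fin n → ℚ_[p]) ((p:ℝ)^(k+1)) ⊆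
      ⋃ c : Fin n → Fin p,
        ((fun i => ((c i : ℕ) : ℚ_[p]) * (p:ℚ_[p]) ^ (-(k+1:ℤ))) +ᵥ
          closedBall (0 : Fin n → ℚ_[p]) ((p:ℝ)^k)) := by
    intro x hx
    rw [mem_closedBall, dist_zero_right] at hx
    have hxc : ∀ i, ‖x i‖ ≤ (p:ℝ)^(k+1) := fun i => (norm_le_pi_norm x i).trans hx
    choose c hc using fun i => aux_digit k (x i) (hxc i)
    refine mem_iUnion.mpr ⟨c, ?_⟩
    rw [Set.mem_vadd_set_iff_neg_vadd_mem, mem_closedBall, dist_zero_right]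
    refine (pi_norm_le_iff_of_nonneg (by positivity)).mpr fun i => ?_
    have : (-(fun i => ((c i : ℕ) : ℚ_[p]) * (p:ℚ_[p]) ^ (-(k+1:ℤ))) +ᵥ x) i =
        x i - ((c i : ℕ) : ℚ_[p]) * (p:ℚ_[p]) ^ (-(k+1:ℤ)) := by
      simp [neg_add_eq_sub]
    rw [this]
    exact hc i
  calc μ (closedBall 0 ((p:ℝ)^(k+1))) ≤ _ := measure_mono hsub
    _ ≤ ∑' c : Fin n → Fin p, μ ((fun i => ((c i : ℕ) : ℚ_[p]) * (p:ℚ_[p]) ^ (-(k+1:ℤ))) +ᵥ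
          closedBall (0 : Fin n → ℚ_[p]) ((p:ℝ)^k)) := measure_iUnion_le _
    _ = ∑' _c : Fin n → Fin p, μ (closedBall (0 : Fin n → ℚ_[p]) ((p:ℝ)^k)) := by
        congr 1; funext c; exact measure_vadd μ _ _
    _ = (Fintype.card (Fin n → Fin p)) * μ (closedBall (0 : Fin n → ℚ_[p]) ((p:ℝ)^k)) := by
        rw [tsum_fintype]
        simp [Finset.sum_const, nsmul_eq_mul]
    _ = (p:ℝ≥0∞)^n * μ (closedBall (0 : Fin n → ℚ_[p]) ((p:ℝ)^k)) := by
        congr 1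
        rw [Fintype.card_fun]
        simp

lemma aux_summable {a q R : ℝ} (ha : 0 < a) (hq : 1 < q) (hR : 0 ≤ R) :
    Summable fun k : ℕ => R ^ k * Real.exp (-(a * q ^ k)) := by
  obtain ⟨m, hm⟩ := pow_unbounded_of_one_lt R hq
  have hq0 : (0:ℝ) < q := lt_trans one_pos hq
  have hqm : (0:ℝ) < q ^ m := by positivity
  have hsum : Summable fun k : ℕ => ((m.factorial : ℝ) / a ^ m) * (R / q ^ m) ^ k := by
    apply Summable.mul_left
    apply summable_geometric_of_lt_one (by positivity)
    rw [div_lt_one hqm]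
    exact hm
  refine Summable.of_nonneg_of_le (fun k => by positivity) (fun k => ?_) hsum
  have hqk : (0:ℝ) < q ^ k := by positivity
  have hexp : (a * q ^ k) ^ m / m.factorial ≤ Real.exp (a * q ^ k) :=
    Real.pow_div_factorial_le_exp _ (by positivity) m
  have hexp' : Real.exp (-(a * q ^ k)) ≤ (m.factorial : ℝ) / (a * q ^ k) ^ m := by
    rw [Real.exp_neg]
    rw [inv_le_comm₀ (Real.exp_pos _) (by positivity), inv_div,
      div_le_iff₀ (by positivity : (0:ℝ) < (m.factorial : ℝ))]
    rw [div_le_iff₀ (by positivity : (0:ℝ) < (m.factorial : ℝ))] at hexp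
    exact hexp
  calc R ^ k * Real.exp (-(a * q ^ k)) ≤ R ^ k * ((m.factorial : ℝ) / (a * q ^ k) ^ m) := by
        gcongr
    _ = ((m.factorial : ℝ) / a ^ m) * (R / q ^ m) ^ k := by
        rw [mul_pow, div_pow, ← pow_mul, ← pow_mul, mul_comm k m]
        field_simp

set_option maxHeartbeats 1000000 in
theorem exp_symbol_memLp (p : ℕ) [Fact p.Prime] [MeasurableSpace ℚ_[p]] [BorelSpace ℚ_[p]]
    (n d : ℕ) (hd : 0 < d)
    (f : MvPolynomial (Fin n) ℚ_[p])
    (hhom : f.IsHomogeneous d)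
    (hzero : ∀ ξ : Fin n → ℚ_[p], eval ξ f = 0 ↔ ξ = 0)
    (β : ℝ) (hβ : 0 < β) (ρ : ℝ) (hρ : 1 ≤ ρ) (t : ℝ) (ht : 0 < t)
    (μ : Measure (Fin n → ℚ_[p])) [μ.IsAddHaarMeasure] :
    MemLp (fun ξ : Fin n → ℚ_[p] => Real.exp (-(t * ‖eval ξ f‖ ^ β)))
      (ENNReal.ofReal ρ) μ := by
  obtain ⟨C, hC, hell⟩ := aux_elliptic hd f hhom hzero
  have hp1 : (1:ℝ) < p := by exact_mod_cast (Fact.out : p.Prime).one_lt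
  have hp0 : (0:ℝ) < p := lt_trans one_pos hp1
  -- continuity
  have hcont : Continuous fun ξ : Fin n → ℚ_[p] => Real.exp (-(t * ‖eval ξ f‖ ^ β)) := by
    apply Real.continuous_exp.comp
    apply Continuous.neg
    exact continuous_const.mul
      (((MvPolynomial.continuous_eval (p := f)).norm).rpow_const fun x => Or.inr hβ.le)
  -- the dominating ENNReal-valued function
  set G : (Fin n → ℚ_[p]) → ℝ≥0∞ :=
    fun ξ => ENNReal.ofReal (Real.exp (-(t * ‖eval ξ f‖ ^ β))) with hGdef
  have hGle1 : ∀ ξ, G ξ ≤ 1 := by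
    intro ξ
    rw [hGdef]
    simp only
    rw [show (1:ℝ≥0∞) = ENNReal.ofReal 1 by simp]
    apply ENNReal.ofReal_le_ofReal
    rw [Real.exp_le_one_iff]
    have : 0 ≤ t * ‖eval ξ f‖ ^ β := by positivity
    linarith
  -- balls
  set B : ℕ → Set (Fin n → ℚ_[p]) := fun k => closedBall 0 ((p:ℝ)^k) with hBdef
  have hB0 : μ (B 0) < ∞ := (isCompact_closedBall _ _).measure_lt_top
  have hBbound : ∀ k, μ (B k) ≤ ((p:ℝ≥0∞)^n)^k * μ (B 0) := by
    intro k
    induction k with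
    | zero => simp
    | succ j ih =>
      calc μ (B (j+1)) ≤ (p:ℝ≥0∞)^n * μ (B j) := aux_ball_cover n μ j
        _ ≤ (p:ℝ≥0∞)^n * (((p:ℝ≥0∞)^n)^j * μ (B 0)) := by gcongr
        _ = ((p:ℝ≥0∞)^n)^(j+1) * μ (B 0) := by rw [pow_succ]; ring
  -- shells
  set T : ℕ → Set (Fin n → ℚ_[p]) :=
    fun k => Nat.casesOn k (B 0) (fun j => B (j+1) \ B j) with hTdef
  have huniv : (univ : Set (Fin n → ℚ_[p])) ⊆ ⋃ k, T k := by
    intro ξ _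
    have hex : ∃ k, ξ ∈ B k := by
      obtain ⟨k, hk⟩ := pow_unbounded_of_one_lt ‖ξ‖ hp1
      exact ⟨k, by simpa [hBdef, mem_closedBall, dist_zero_right] using hk.le⟩
    classical
    rw [mem_iUnion]
    rcases hk0 : Nat.find hex with _ | j
    · exact ⟨0, by simpa [hTdef] using (hk0 ▸ Nat.find_spec hex)⟩
    · refine ⟨j+1, ?_⟩
      have h1 : ξ ∈ B (j+1) := hk0 ▸ Nat.find_spec hex
      have h2 : ξ ∉ B j := Nat.find_min hex (by omega)
      simpa [hTdef] using ⟨h1, h2⟩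
  -- pointwise bound on shells
  set w : ℕ → ℝ≥0∞ :=
    fun j => ENNReal.ofReal (Real.exp (-(t * (C * (p:ℝ)^(j*d)) ^ β))) with hwdef
  have hshell : ∀ j, ∀ ξ ∈ T (j+1), G ξ ≤ w j := by
    intro j ξ hξ
    have hξ1 : ξ ∈ B (j+1) := hξ.1
    have hξ2 : ξ ∉ B j := hξ.2
    have hnorm : (p:ℝ)^j ≤ ‖ξ‖ := by
      by_contra h
      apply hξ2
      show ξ ∈ closedBall 0 ((p:ℝ)^j)
      rw [mem_closedBall, dist_zero_right]
      exact (not_le.mp h).le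
    have heval : C * (p:ℝ)^(j*d) ≤ ‖eval ξ f‖ := by
      calc C * (p:ℝ)^(j*d) = C * ((p:ℝ)^j)^d := by rw [← pow_mul]
        _ ≤ C * ‖ξ‖^d := by gcongr
        _ ≤ ‖eval ξ f‖ := hell ξ
    apply ENNReal.ofReal_le_ofReal
    apply Real.exp_le_exp.mpr
    rw [neg_le_neg_iff]
    gcongr
  -- the lintegral of G is finite
  have hGint : ∫⁻ ξ, G ξ ∂μ < ∞ := by
    have hsplit : ∫⁻ ξ, G ξ ∂μ ≤ ∑' k, ∫⁻ ξ in T k, G ξ ∂μ := by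
      calc ∫⁻ ξ, G ξ ∂μ = ∫⁻ ξ in univ, G ξ ∂μ := (setLIntegral_univ _).symm
        _ ≤ ∫⁻ ξ in ⋃ k, T k, G ξ ∂μ := lintegral_mono_set huniv
        _ ≤ ∑' k, ∫⁻ ξ in T k, G ξ ∂μ := lintegral_iUnion_le _ _
    have hzeroterm : ∫⁻ ξ in T 0, G ξ ∂μ ≤ μ (B 0) := by
      calc ∫⁻ ξ in T 0, G ξ ∂μ ≤ ∫⁻ _ in T 0, 1 ∂μ :=
            setLIntegral_mono measurable_const (fun ξ _ => hGle1 ξ)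
        _ = μ (B 0) := setLIntegral_one _
    have hjterm : ∀ j, ∫⁻ ξ in T (j+1), G ξ ∂μ ≤ w j * (((p:ℝ≥0∞)^n)^(j+1) * μ (B 0)) := by
      intro j
      calc ∫⁻ ξ in T (j+1), G ξ ∂μ ≤ ∫⁻ _ in T (j+1), w j ∂μ :=
            setLIntegral_mono measurable_const (hshell j)
        _ = w j * μ (T (j+1)) := setLIntegral_const _ _
        _ ≤ w j * μ (B (j+1)) := by
            gcongr
            exact diff_subset
        _ ≤ w j * (((p:ℝ≥0∞)^n)^(j+1) * μ (B 0)) := by gcongr; exact hBbound (j+1)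
    -- summability of the series
    have hq1 : (1:ℝ) < ((p:ℝ)^d) ^ β :=
      (Real.one_lt_rpow_iff_of_pos (by positivity)).mpr
        (Or.inl ⟨one_lt_pow₀ hp1 hd.ne', hβ⟩)
    have ha : (0:ℝ) < t * C ^ β := by
      have := Real.rpow_pos_of_pos hC β
      positivity
    have hu : Summable fun j : ℕ =>
        Real.exp (-(t * (C * (p:ℝ)^(j*d)) ^ β)) * (p:ℝ)^(n*(j+1)) := by
      have hs := (aux_summable ha hq1 (by positivity : (0:ℝ) ≤ (p:ℝ)^n)).mul_left ((p:ℝ)^n)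
      apply hs.congr
      intro j
      have e1 : (C * (p:ℝ)^(j*d)) ^ β = C ^ β * (((p:ℝ)^d) ^ β) ^ j := by
        rw [Real.mul_rpow hC.le (by positivity)]
        congr 1
        rw [mul_comm j d, pow_mul]
        rw [← Real.rpow_natCast ((p:ℝ)^d) j, ← Real.rpow_mul (by positivity),
          mul_comm (j:ℝ) β, Real.rpow_mul (by positivity), Real.rpow_natCast]
      have e2 : (p:ℝ)^(n*(j+1)) = (p:ℝ)^n * ((p:ℝ)^n)^j := by
        rw [← pow_mul, ← pow_add]
        congr 1
        ring
      rw [e1, e2, ← mul_assoc t (C ^ β)]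
      ring
    have hofReal : ∀ j, w j * ((p:ℝ≥0∞)^n)^(j+1) =
        ENNReal.ofReal (Real.exp (-(t * (C * (p:ℝ)^(j*d)) ^ β)) * (p:ℝ)^(n*(j+1))) := by
      intro j
      rw [ENNReal.ofReal_mul (Real.exp_pos _).le, hwdef]
      congr 1
      rw [← pow_mul, ← ENNReal.ofReal_natCast p, ← ENNReal.ofReal_pow hp0.le]
    have hS : (∑' j, w j * ((p:ℝ≥0∞)^n)^(j+1)) < ∞ := by
      have := ENNReal.ofReal_tsum_of_nonneg
        (fun j => by positivity) hu
      calc (∑' j, w j * ((p:ℝ≥0∞)^n)^(j+1))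
          = ∑' j, ENNReal.ofReal (Real.exp (-(t * (C * (p:ℝ)^(j*d)) ^ β)) * (p:ℝ)^(n*(j+1))) := by
            exact tsum_congr hofReal
        _ = ENNReal.ofReal (∑' j, Real.exp (-(t * (C * (p:ℝ)^(j*d)) ^ β)) * (p:ℝ)^(n*(j+1))) :=
            this.symm
        _ < ∞ := ENNReal.ofReal_lt_top
    calc ∫⁻ ξ, G ξ ∂μ ≤ ∑' k, ∫⁻ ξ in T k, G ξ ∂μ := hsplit
      _ = (∫⁻ ξ in T 0, G ξ ∂μ) + ∑' j, ∫⁻ ξ in T (j+1), G ξ ∂μ :=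
          tsum_eq_zero_add' ENNReal.summable
      _ ≤ μ (B 0) + ∑' j, w j * (((p:ℝ≥0∞)^n)^(j+1) * μ (B 0)) := by
          exact add_le_add hzeroterm (ENNReal.tsum_le_tsum hjterm)
      _ = μ (B 0) + (∑' j, w j * ((p:ℝ≥0∞)^n)^(j+1)) * μ (B 0) := by
          rw [← ENNReal.tsum_mul_right]
          congr 1
          exact tsum_congr fun j => by ring
      _ < ∞ := by
          apply ENNReal.add_lt_top.mpr
          exact ⟨hB0, ENNReal.mul_lt_top hS hB0⟩
  -- conclude
  refine ⟨hcont.aestronglyMeasurable, ?_⟩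
  have hρ0 : ENNReal.ofReal ρ ≠ 0 := by
    simp only [ne_eq, ENNReal.ofReal_eq_zero, not_le]
    linarith
  have hρtop : ENNReal.ofReal ρ ≠ ∞ := ENNReal.ofReal_ne_top
  rw [eLpNorm_eq_lintegral_rpow_enorm_toReal hρ0 hρtop]
  apply ENNReal.rpow_lt_top_of_nonneg (by positivity)
  have htoReal : (ENNReal.ofReal ρ).toReal = ρ := ENNReal.toReal_ofReal (by linarith)
  have hpt : ∀ ξ : Fin n → ℚ_[p],
      ((‖Real.exp (-(t * ‖eval ξ f‖ ^ β))‖₊ : ℝ≥0∞)) ^ (ENNReal.ofReal ρ).toReal ≤ G ξ := by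
    intro ξ
    have hpos : (0:ℝ) ≤ Real.exp (-(t * ‖eval ξ f‖ ^ β)) := (Real.exp_pos _).le
    have h1 : ((‖Real.exp (-(t * ‖eval ξ f‖ ^ β))‖₊ : ℝ≥0∞)) = G ξ := by
      rw [hGdef]; show ‖Real.exp (-(t * ‖eval ξ f‖ ^ β))‖ₑ = _; rw [← ofReal_norm, Real.norm_of_nonneg hpos]
    rw [h1, htoReal]
    calc (G ξ) ^ ρ ≤ (G ξ) ^ (1:ℝ) :=
          ENNReal.rpow_le_rpow_of_exponent_ge (hGle1 ξ) hρ
      _ = G ξ := ENNReal.rpow_one _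
  exact ne_of_lt (lt_of_le_of_lt (lintegral_mono hpt) hGint)
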